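/- Let C ⊆ ℝⁿ be a closed convex set and h ∉ C. Then the function t ↦ dist((1 + t)h, C) is differentiable at t = 0 with derivative ⟨h, Π(h,C)/‖Π(h,C)‖⟩, where Π(h,C) = h − Proj(h,C). -/

import Mathlib

theorem stmt4 {n : ℕ} (C : Set (EuclideanSpace ℝ (Fin n))) (hCcl : IsClosed C)
    (hCconv : Convex ℝ C) (hCne : C.Nonempty) (h p : EuclideanSpace ℝ (Fin n)) (hh : h ∉ C)
    (hpC : p ∈ C) (hproj : ∀ s ∈ C, ‖h - p‖ ≤ ‖h - s‖) :
    HasDerivAt (fun t : ℝ => Metric.infDist ((1 + t) • h) C)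
      ((inner ℝ h (‖h - p‖⁻¹ • (h - p)) : ℝ)) 0 := by
  have hp0 : h - p ≠ 0 := sub_ne_zero.2 fun e => hh (e ▸ hpC)
  have hnp : ‖h - p‖ ≠ 0 := norm_ne_zero_iff.2 hp0
  have hnpos : (0:ℝ) < ‖h - p‖ := (norm_nonneg _).lt_of_ne' hnp
  set u : EuclideanSpace ℝ (Fin n) := ‖h - p‖⁻¹ • (h - p) with hu
  set c : ℝ := inner ℝ h u with hc
  -- inner ℝ (h-p) u = ‖h-p‖
  have hinn : (inner ℝ (h - p) u : ℝ) = ‖h - p‖ := by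
    rw [hu, real_inner_smul_right, real_inner_self_eq_norm_sq]
    field_simp
  -- characterization of projection
  haveI : Nonempty ↑C := hCne.to_subtype
  have hiInf : ‖h - p‖ = ⨅ w : C, ‖h - w‖ := by
    refine le_antisymm (le_ciInf fun w => hproj w w.2) ?_
    exact ciInf_le ⟨0, fun x ⟨w, hw⟩ => hw ▸ norm_nonneg _⟩ (⟨p, hpC⟩ : C)
  have hchar : ∀ s ∈ C, (inner ℝ (h - p) (s - p) : ℝ) ≤ 0 :=
    (norm_eq_iInf_iff_real_inner_le_zero hCconv hpC).1 hiInf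
  have hcharu : ∀ s ∈ C, (inner ℝ (s - p) u : ℝ) ≤ 0 := by
    intro s hs
    rw [hu, real_inner_smul_right, real_inner_comm]
    exact mul_nonpos_of_nonneg_of_nonpos (by positivity) (hchar s hs)
  have hU : ‖u‖ = 1 := by
    rw [hu, norm_smul, norm_inv, norm_norm, inv_mul_cancel₀ hnp]
  have hx : ∀ t : ℝ, (1 + t) • h - p = (h - p) + t • h := by
    intro t; rw [add_smul, one_smul]; abel
  -- lower bound
  have hlow : ∀ t : ℝ, ‖h - p‖ + t * c ≤ Metric.infDist ((1 + t) • h) C := by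
    intro t
    rw [Metric.infDist_eq_iInf]
    refine le_ciInf fun w => ?_
    obtain ⟨s, hs⟩ := w
    have h1 : (inner ℝ ((1 + t) • h - p) u : ℝ) = ‖h - p‖ + t * c := by
      rw [hx, inner_add_left, real_inner_smul_left, hinn, hc]
    have h2 : (inner ℝ ((1 + t) • h - p) u : ℝ) ≤ inner ℝ ((1 + t) • h - s) u := by
      have : (1 + t) • h - s = ((1 + t) • h - p) - (s - p) := by abel
      have h' : (inner ℝ s u : ℝ) - inner ℝ p u ≤ 0 := by
        simpa [inner_sub_left] using hcharu s hs
      rw [this]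
      simp only [inner_sub_left]
      linarith
    have h3 : (inner ℝ ((1 + t) • h - s) u : ℝ) ≤ ‖(1 + t) • h - s‖ := by
      calc (inner ℝ ((1 + t) • h - s) u : ℝ) ≤ ‖(1 + t) • h - s‖ * ‖u‖ :=
            real_inner_le_norm _ _
        _ = ‖(1 + t) • h - s‖ := by rw [hU, mul_one]
    simp only [dist_eq_norm]
    linarith
  -- upper bound
  have hupp : ∀ t : ℝ, Metric.infDist ((1 + t) • h) C ≤ ‖(h - p) + t • h‖ := by
    intro t
    calc Metric.infDist ((1 + t) • h) C ≤ dist ((1 + t) • h) p :=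
          Metric.infDist_le_dist_of_mem hpC
      _ = ‖(h - p) + t • h‖ := by rw [dist_eq_norm, hx]
  -- derivative of g t = ‖(h-p)+t•h‖
  have hq : HasDerivAt (fun t : ℝ => ‖(h - p) + t • h‖ ^ 2) (2 * inner ℝ (h - p) h) 0 := by
    have hlin : HasDerivAt (fun t : ℝ => (h - p) + t • h) h 0 := by
      simpa using ((hasDerivAt_id (0:ℝ)).smul_const h).const_add (h - p)
    simpa using hlin.norm_sq
  have hq0 : ‖(h - p) + (0:ℝ) • h‖ ^ 2 ≠ 0 := by
    simp [hp0]
  have hg : HasDerivAt (fun t : ℝ => ‖(h - p) + t • h‖) c 0 := by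
    have hsqrt := (Real.hasDerivAt_sqrt hq0).comp 0 hq
    have heq : (fun t : ℝ => Real.sqrt (‖(h - p) + t • h‖ ^ 2)) =
        fun t : ℝ => ‖(h - p) + t • h‖ := by
      funext t; rw [Real.sqrt_sq (norm_nonneg _)]
    rw [Function.comp_def, heq] at hsqrt
    refine hsqrt.congr_deriv ?_
    have : Real.sqrt (‖(h - p) + (0:ℝ) • h‖ ^ 2) = ‖h - p‖ := by
      simp [Real.sqrt_sq (norm_nonneg _)]
    rw [this, hc, hu, real_inner_smul_right, real_inner_comm]
    field_simp
  -- value at 0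
  have hf0 : Metric.infDist ((1 + (0:ℝ)) • h) C = ‖h - p‖ := by
    refine le_antisymm ?_ (by simpa using hlow 0)
    simpa using hupp 0
  -- squeeze via little-o
  rw [hasDerivAt_iff_isLittleO] at hg ⊢
  refine (Asymptotics.isBigO_of_le _ fun t => ?_).trans_isLittleO hg
  have l1 := hlow t
  have l2 := hupp t
  have g0 : ‖(h - p) + (0:ℝ) • h‖ = ‖h - p‖ := by simp
  simp only [Real.norm_eq_abs, hf0, g0, smul_eq_mul, sub_zero]
  have hA : (0:ℝ) ≤ Metric.infDist ((1 + t) • h) C - ‖h - p‖ - t * c := by linarith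
  have hAB : Metric.infDist ((1 + t) • h) C - ‖h - p‖ - t * c ≤
      ‖h - p + t • h‖ - ‖h - p‖ - t * c := by linarith
  rw [abs_of_nonneg hA, abs_of_nonneg (hA.trans hAB)]
  exact hAB
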